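/- Let V and C be finite sets, E ⊆ V × C, A ⊆ E, and let R and R' be the least closed sets defined in the context. Then R ∩ A ⊆ R': every active edge resolved by the IDENTIFY decoder is also resolved by the genie-aided decoder. -/
import Mathlib


/-- Least set `R ⊆ Ed` closed under the two decoding rules of the IDENTIFY decoder on
a bipartite graph with edge set `Ed ⊆ V × C` and active-edge set `A ⊆ Ed`:
(VN rule) if `(v,c) ∈ R` and `(v,c') ∈ Ed` then `(v,c') ∈ R`;
(CN rule) if `(v,c) ∈ A` and every `(v',c) ∈ A` with `v' ≠ v` is in `R`,
then `(v,c) ∈ R`.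
The genie-aided decoder (which knows the dropped replicas) is obtained by
instantiating the first argument `Ed` with `A` itself. -/
inductive Resolved {V C : Type*} (Ed A : Set (V × C)) : V × C → Prop
  | vn {v : V} {c c' : C} : Resolved Ed A (v, c) → (v, c') ∈ Ed → Resolved Ed A (v, c')
  | cn {v : V} {c : C} : (v, c) ∈ A →
      (∀ v' : V, v' ≠ v → (v', c) ∈ A → Resolved Ed A (v', c)) → Resolved Ed A (v, c)

/-- `R ∩ A ⊆ R'` — every active edge resolved by the IDENTIFY decoder is
also resolved by the genie-aided decoder. -/
theorem stmt_15 {V C : Type*} [Fintype V] [Fintype C]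
    (Ed A : Set (V × C)) (hA : A ⊆ Ed) :
    {e | Resolved Ed A e} ∩ A ⊆ {e | Resolved A A e} := by
  have key : ∀ e, Resolved Ed A e → ∀ c'' : C, (e.1, c'') ∈ A → Resolved A A (e.1, c'') := by
    intro e h
    induction h with
    | vn h hE ih => exact ih
    | cn hvc hothers ih =>
      have hvcA : Resolved A A (_, _) :=
        Resolved.cn hvc (fun v' hne hA' => ih v' hne hA' _ hA')
      intro c'' hc''
      exact Resolved.vn hvcA hc''
  rintro ⟨v, c⟩ ⟨hR, hAe⟩
  exact key (v, c) hR c hAe
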